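/- Let N > 1, κ ∈ {−1, 0, 1}, K = κ(N−1), λ ∈ (0,1], and L > 0, with L < π in the case κ = 1. Then for every ε > 0 there exists v̄ > 0, depending only on N, λ, L, ε, such that for every D ∈ [λL, L] and every a ∈ (0, D), if v := v_{K,N,D}(a) < v̄ then |f_{K,N,D}(a)·k_D^{1/N} / v^{(N−1)/N} − 1| ≤ ε. In other words, the one-dimensional MCP(K,N) isoperimetric profile satisfies Ĩ_{K,N,D}(v) = f_{K,N,D}(a_{K,N,D}(v)) = k_D^{−1/N} v^{(N−1)/N} (1 + o(1)) as v → 0⁺, uniformly in D ∈ [λL, L]. -/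

import Mathlib

open MeasureTheory Filter Set
open Topology

/-- The function `s_κ`. -/
noncomputable def sK (κ θ : ℝ) : ℝ :=
  if 0 < κ then Real.sin (Real.sqrt κ * θ) / Real.sqrt κ
  else if κ = 0 then θ
  else Real.sinh (Real.sqrt (-κ) * θ) / Real.sqrt (-κ)

/-- `k_D = ∫₀^D s_κ(t)^(N-1) dt`. -/
noncomputable def kD (κ N D : ℝ) : ℝ := ∫ t in (0:ℝ)..D, sK κ t ^ (N - 1)

/-- The function `f_{K,N,D}` (with `K = κ(N-1)`). -/
noncomputable def fKND (κ N D x : ℝ) : ℝ :=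
  ((∫ y in (0:ℝ)..x, (sK κ (D - y) / sK κ (D - x)) ^ (N - 1)) +
    ∫ y in x..D, (sK κ y / sK κ x) ^ (N - 1))⁻¹

/-- The model density `h^a_{K,N,D}` (with `K = κ(N-1)`). -/
noncomputable def hKND (κ N D a x : ℝ) : ℝ :=
  if x ≤ a then fKND κ N D a * (sK κ (D - x) / sK κ (D - a)) ^ (N - 1)
  else fKND κ N D a * (sK κ x / sK κ a) ^ (N - 1)

/-- The volume map `v_{K,N,D}(a) = ∫₀^a h^a_{K,N,D}`. -/
noncomputable def vKND (κ N D a : ℝ) : ℝ := ∫ x in (0:ℝ)..a, hKND κ N D a x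

/-- `ω_N = π^(N/2)/Γ(N/2+1)`. -/
noncomputable def omegaN (N : ℝ) : ℝ := Real.pi ^ (N / 2) / Real.Gamma (N / 2 + 1)

/-- `Vol_{K,N}(r) = N ω_N ∫₀^r s_κ(t)^(N-1) dt` (with `K = κ(N-1)`). -/
noncomputable def VolKN (κ N r : ℝ) : ℝ := N * omegaN N * ∫ t in (0:ℝ)..r, sK κ t ^ (N - 1)

/-- The coefficient `σ^{(s)}_{K,N-1}(θ)`, valued in `[0,∞]`. -/
noncomputable def sigmaE (K N s θ : ℝ) : ENNReal :=
  if (N - 1) * Real.pi ^ 2 ≤ K * θ ^ 2 then ⊤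
  else ENNReal.ofReal (sK (K / (N - 1)) (s * θ) / sK (K / (N - 1)) θ)

/-- A nonnegative continuous function `h` on the interval `I` is an `MCP(K,N)` density. -/
def IsMCPDensity (K N : ℝ) (I : Set ℝ) (h : ℝ → ℝ) : Prop :=
  ContinuousOn h I ∧ (∀ x ∈ I, 0 ≤ h x) ∧
    ∀ x₀ ∈ I, ∀ x₁ ∈ I, ∀ t ∈ Set.Icc (0:ℝ) 1,
      sigmaE K N (1 - t) |x₁ - x₀| ^ (N - 1) * ENNReal.ofReal (h x₀) ≤
        ENNReal.ofReal (h (t * x₁ + (1 - t) * x₀))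

/-- The measure `h·𝓛¹` restricted to `[0,D]`. -/
noncomputable def mcMeasure (D : ℝ) (h : ℝ → ℝ) : Measure ℝ :=
  (volume.restrict (Set.Icc 0 D)).withDensity fun x => ENNReal.ofReal (h x)

/-- The outer Minkowski content `μ⁺(E) = liminf_{ρ→0⁺} (μ(E^ρ) - μ(E))/ρ`. -/
noncomputable def minkContent (μ : Measure ℝ) (E : Set ℝ) : ℝ :=
  Filter.liminf (fun ρ : ℝ => ((μ (Metric.thickening ρ E)).toReal - (μ E).toReal) / ρ)
    (nhdsWithin 0 (Set.Ioi 0))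

lemma sK_one (θ : ℝ) : sK 1 θ = Real.sin θ := by
  simp [sK, Real.sqrt_one]

lemma sK_zero (θ : ℝ) : sK 0 θ = θ := by
  simp [sK]

lemma sK_neg_one (θ : ℝ) : sK (-1) θ = Real.sinh θ := by
  norm_num [sK, Real.sqrt_one]

lemma sK_continuous {κ : ℝ} (hκ : κ = -1 ∨ κ = 0 ∨ κ = 1) : Continuous (sK κ) := by
  rcases hκ with h | h | h <;> subst h <;>
    simp only [funext sK_one, funext sK_zero, funext sK_neg_one] <;> fun_prop

lemma sK_pos {κ t : ℝ} (hκ : κ = -1 ∨ κ = 0 ∨ κ = 1) (ht : 0 < t)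
    (hπ : κ = 1 → t < Real.pi) : 0 < sK κ t := by
  rcases hκ with h | h | h <;> subst h
  · rw [sK_neg_one]; exact Real.sinh_pos_iff.2 ht
  · rwa [sK_zero]
  · rw [sK_one]; exact Real.sin_pos_of_pos_of_lt_pi ht (hπ rfl)

lemma sK_nonneg {κ t : ℝ} (hκ : κ = -1 ∨ κ = 0 ∨ κ = 1) (ht : 0 ≤ t)
    (hπ : κ = 1 → t ≤ Real.pi) : 0 ≤ sK κ t := by
  rcases hκ with h | h | h <;> subst h
  · rw [sK_neg_one]; simpa using Real.sinh_le_sinh.2 ht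
  · rwa [sK_zero]
  · rw [sK_one]; exact Real.sin_nonneg_of_nonneg_of_le_pi ht (hπ rfl)

lemma sinh_le_mul_cosh {t : ℝ} (ht : 0 ≤ t) : Real.sinh t ≤ t * Real.cosh t := by
  have key : ∀ x ∈ Set.Ici (0:ℝ), ∀ y ∈ Set.Ici (0:ℝ), x ≤ y →
      (fun x => x * Real.cosh x - Real.sinh x) x ≤ (fun x => x * Real.cosh x - Real.sinh x) y := by
    apply monotoneOn_of_deriv_nonneg (convex_Ici 0)
    · fun_prop
    · exact ((differentiable_id.mul Real.differentiable_cosh).sub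
        Real.differentiable_sinh).differentiableOn
    · intro x hx
      rw [interior_Ici] at hx
      have h1 : HasDerivAt (fun x => x * Real.cosh x - Real.sinh x) (x * Real.sinh x) x := by
        have := ((hasDerivAt_id x).mul (Real.hasDerivAt_cosh x)).sub (Real.hasDerivAt_sinh x)
        refine this.congr_deriv ?_
        simp only [id_eq, one_mul]; ring
      rw [h1.deriv]
      exact mul_nonneg (le_of_lt hx) (by simpa using Real.sinh_le_sinh.2 (le_of_lt hx))
  have := key 0 (by simp) t ht ht
  simp at this
  linarith

lemma sK_le_mul_cosh {κ t u : ℝ} (hκ : κ = -1 ∨ κ = 0 ∨ κ = 1) (ht : 0 ≤ t) (htu : t ≤ u) :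
    sK κ t ≤ t * Real.cosh u := by
  have hcosh : Real.cosh t ≤ Real.cosh u := by
    rw [Real.cosh_le_cosh]
    rw [abs_of_nonneg ht, abs_of_nonneg (le_trans ht htu)]
    exact htu
  have h1 : (1:ℝ) ≤ Real.cosh u := le_trans (Real.one_le_cosh t) hcosh
  rcases hκ with h | h | h <;> subst h
  · rw [sK_neg_one]
    exact le_trans (sinh_le_mul_cosh ht) (by nlinarith)
  · rw [sK_zero]; nlinarith
  · rw [sK_one]
    rcases eq_or_lt_of_le ht with h | h
    · simp [← h]
    · exact le_trans (le_of_lt (Real.sin_lt h)) (by nlinarith)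

lemma sK_ge {κ t u : ℝ} (hκ : κ = -1 ∨ κ = 0 ∨ κ = 1) (ht : 0 ≤ t) (htu : t ≤ u)
    (hu : u ≤ 1) : t * (1 - u ^ 2 / 4) ≤ sK κ t := by
  have hfac : 1 - u ^ 2 / 4 ≤ 1 := by nlinarith [sq_nonneg u]
  rcases hκ with h | h | h <;> subst h
  · rw [sK_neg_one]
    have : t ≤ Real.sinh t := by
      rcases eq_or_lt_of_le ht with h | h
      · simp [← h]
      · exact le_of_lt (Real.self_lt_sinh_iff.2 h)
    nlinarith
  · rw [sK_zero]; nlinarith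
  · rw [sK_one]
    rcases eq_or_lt_of_le ht with h | h
    · simp [← h]
    · have := Real.sin_gt_sub_cube h
      have h2 : t * t ^ 2 ≤ t * u ^ 2 :=
        mul_le_mul_of_nonneg_left (by nlinarith) ht
      nlinarith

lemma sK_lip {κ x y M : ℝ} (hκ : κ = -1 ∨ κ = 0 ∨ κ = 1) (hx : 0 ≤ x) (hy : 0 ≤ y)
    (hxM : x ≤ M) (hyM : y ≤ M) : |sK κ x - sK κ y| ≤ Real.cosh M * |x - y| := by
  have h1 : (1:ℝ) ≤ Real.cosh M := Real.one_le_cosh M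
  rcases hκ with h | h | h <;> subst h
  · rw [sK_neg_one, sK_neg_one]
    have key : ‖Real.sinh x - Real.sinh y‖ ≤ Real.cosh M * ‖x - y‖ := by
      apply Convex.norm_image_sub_le_of_norm_deriv_le
        (fun z _ => Real.differentiable_sinh z) ?_ (convex_Icc 0 M) ⟨hy, hyM⟩ ⟨hx, hxM⟩
      intro z hz
      rw [Real.deriv_sinh, Real.norm_eq_abs, abs_of_nonneg (Real.cosh_pos z).le,
        Real.cosh_le_cosh, abs_of_nonneg hz.1, abs_of_nonneg (le_trans hz.1 hz.2)]
      exact hz.2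
    simpa [Real.norm_eq_abs] using key
  · rw [sK_zero, sK_zero]
    nlinarith [abs_nonneg (x - y)]
  · rw [sK_one, sK_one]
    have key : ‖Real.sin x - Real.sin y‖ ≤ 1 * ‖x - y‖ := by
      apply Convex.norm_image_sub_le_of_norm_deriv_le
        (fun z _ => Real.differentiable_sin z) ?_ convex_univ (mem_univ y) (mem_univ x)
      intro z _
      rw [Real.deriv_sin, Real.norm_eq_abs]
      exact Real.abs_cos_le_one z
    rw [Real.norm_eq_abs, Real.norm_eq_abs] at key
    nlinarith [abs_nonneg (x - y), key]

lemma crpow_const {q : ℝ} (hq : 0 ≤ q) : Continuous (fun x : ℝ => x ^ q) := by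
  rw [continuous_iff_continuousAt]
  exact fun x => Real.continuousAt_rpow_const x q (Or.inr hq)

lemma const_le_integral {f : ℝ → ℝ} {a c : ℝ} (ha : 0 ≤ a)
    (hf : ContinuousOn f (Icc 0 a)) (hc : ∀ x ∈ Icc 0 a, c ≤ f x) :
    a * c ≤ ∫ x in (0:ℝ)..a, f x := by
  have hint : IntervalIntegrable f volume 0 a := by
    apply ContinuousOn.intervalIntegrable
    rwa [uIcc_of_le ha]
  have := intervalIntegral.integral_mono_on ha (intervalIntegrable_const (c := c)) hint hc
  simpa using this

lemma integral_le_const {f : ℝ → ℝ} {a C : ℝ} (ha : 0 ≤ a)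
    (hf : ContinuousOn f (Icc 0 a)) (hC : ∀ x ∈ Icc 0 a, f x ≤ C) :
    (∫ x in (0:ℝ)..a, f x) ≤ a * C := by
  have hint : IntervalIntegrable f volume 0 a := by
    apply ContinuousOn.intervalIntegrable
    rwa [uIcc_of_le ha]
  have := intervalIntegral.integral_mono_on ha hint (intervalIntegrable_const (c := C)) hC
  simpa using this

noncomputable def Aint (κ N D a : ℝ) : ℝ :=
  ∫ y in (0:ℝ)..a, (sK κ (D - y) / sK κ (D - a)) ^ (N - 1)

noncomputable def Bint (κ N D a : ℝ) : ℝ :=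
  ∫ y in a..D, (sK κ y / sK κ a) ^ (N - 1)

lemma fKND_eq (κ N D a : ℝ) : fKND κ N D a = (Aint κ N D a + Bint κ N D a)⁻¹ := rfl

lemma vKND_eq (κ N D a : ℝ) (ha : 0 ≤ a) :
    vKND κ N D a = fKND κ N D a * Aint κ N D a := by
  rw [vKND, Aint, ← intervalIntegral.integral_const_mul]
  apply intervalIntegral.integral_congr
  intro x hx
  rw [uIcc_of_le ha] at hx
  rw [hKND, if_pos hx.2]

set_option maxHeartbeats 3200000 in
/-- `Ĩ_{K,N,D}(v) = f_{K,N,D}(a_{K,N,D}(v)) = k_D^(-1/N) v^((N-1)/N) (1+o(1))`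
as `v → 0⁺`, uniformly in `D ∈ [λL, L]`. -/
theorem stmt4 (N κ lam L : ℝ) (hN : 1 < N) (hκ : κ = -1 ∨ κ = 0 ∨ κ = 1)
    (hlam : lam ∈ Set.Ioc (0:ℝ) 1) (hL : 0 < L) (hLpi : κ = 1 → L < Real.pi) :
    ∀ ε > 0, ∃ vbar > 0, ∀ D ∈ Set.Icc (lam * L) L, ∀ a ∈ Set.Ioo (0:ℝ) D,
      vKND κ N D a < vbar →
      |fKND κ N D a * kD κ N D ^ (1 / N) / vKND κ N D a ^ ((N - 1) / N) - 1| ≤ ε := by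
  obtain ⟨hlam0, hlam1⟩ := hlam
  have hq0 : (0:ℝ) < N - 1 := by linarith
  have hq0' : (0:ℝ) ≤ N - 1 := hq0.le
  have hN0 : (0:ℝ) < N := by linarith
  set l := lam * L with hldef
  have hl0 : 0 < l := mul_pos hlam0 hL
  have hlL : l ≤ L := by nlinarith
  have hcont : Continuous (sK κ) := sK_continuous hκ
  have hspos : ∀ t : ℝ, 0 < t → t ≤ L → 0 < sK κ t := fun t ht htL =>
    sK_pos hκ ht (fun h => lt_of_le_of_lt htL (hLpi h))
  have hsnn : ∀ t : ℝ, 0 ≤ t → t ≤ L → 0 ≤ sK κ t := fun t ht htL =>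
    sK_nonneg hκ ht (fun h => le_trans htL (hLpi h).le)
  obtain ⟨m, hm0, hm⟩ : ∃ m, 0 < m ∧ ∀ t ∈ Icc (l/2) L, m ≤ sK κ t := by
    obtain ⟨t0, ht0, hmin⟩ := (isCompact_Icc (a := l/2) (b := L)).exists_isMinOn
      (nonempty_Icc.2 (by linarith)) hcont.continuousOn
    exact ⟨sK κ t0, hspos t0 (by linarith [ht0.1]) ht0.2,
      fun t ht => isMinOn_iff.1 hmin t ht⟩
  obtain ⟨Cm, hCm0, hCm⟩ : ∃ Cm, 0 < Cm ∧ ∀ t ∈ Icc (0:ℝ) L, sK κ t ≤ Cm := by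
    obtain ⟨t0, ht0, hmax⟩ := (isCompact_Icc (a := (0:ℝ)) (b := L)).exists_isMaxOn
      (nonempty_Icc.2 hL.le) hcont.continuousOn
    exact ⟨sK κ t0, lt_of_lt_of_le (hspos (l/2) (by linarith) (by linarith))
      (isMaxOn_iff.1 hmax (l/2) ⟨by linarith, by linarith⟩),
      fun t ht => isMaxOn_iff.1 hmax t ht⟩
  have hcontq : Continuous (fun t => sK κ t ^ (N-1)) := (crpow_const hq0').comp hcont
  have hii : ∀ u v : ℝ, IntervalIntegrable (fun t => sK κ t ^ (N-1)) volume u v :=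
    fun u v => hcontq.intervalIntegrable u v
  set kmin := ∫ t in (0:ℝ)..l, sK κ t ^ (N-1) with hkmindef
  set kmax := ∫ t in (0:ℝ)..L, sK κ t ^ (N-1) with hkmaxdef
  have hkmin0 : 0 < kmin := by
    rw [hkmindef]
    exact intervalIntegral.intervalIntegral_pos_of_pos_on (hii 0 l)
      (fun t ht => Real.rpow_pos_of_pos (hspos t ht.1 (le_trans ht.2.le hlL)) _) hl0
  have hkDlo : ∀ D ∈ Icc l L, kmin ≤ kD κ N D := by
    intro D hD
    have hsplit : kmin + (∫ t in l..D, sK κ t ^ (N-1)) = kD κ N D := by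
      rw [hkmindef, kD]
      exact intervalIntegral.integral_add_adjacent_intervals (hii 0 l) (hii l D)
    have h2 : 0 ≤ ∫ t in l..D, sK κ t ^ (N-1) :=
      intervalIntegral.integral_nonneg hD.1
        (fun u hu => Real.rpow_nonneg (hsnn u (le_trans hl0.le hu.1) (le_trans hu.2 hD.2)) _)
    linarith
  have hkDhi : ∀ D ∈ Icc l L, kD κ N D ≤ kmax := by
    intro D hD
    have hD0 : (0:ℝ) ≤ D := le_trans hl0.le hD.1
    have hsplit : kD κ N D + (∫ t in D..L, sK κ t ^ (N-1)) = kmax := by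
      rw [hkmaxdef, kD]
      exact intervalIntegral.integral_add_adjacent_intervals (hii 0 D) (hii D L)
    have h2 : 0 ≤ ∫ t in D..L, sK κ t ^ (N-1) :=
      intervalIntegral.integral_nonneg hD.2
        (fun u hu => Real.rpow_nonneg (hsnn u (le_trans hD0 hu.1) hu.2) _)
    linarith
  have hkmax0 : 0 < kmax := by
    have h1 := hkDlo L ⟨hlL, le_refl L⟩
    have h2 := hkDhi L ⟨hlL, le_refl L⟩
    exact lt_of_lt_of_le hkmin0 (le_trans h1 h2)
  intro ε hε
  set ε₂ := min ε (1/2) with hε₂def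
  have hε₂0 : 0 < ε₂ := lt_min hε (by norm_num)
  have hε₂ε : ε₂ ≤ ε := min_le_left _ _
  have hε₂h : ε₂ ≤ 1/2 := min_le_right _ _
  have hp1 : (1:ℝ) < (1+ε₂) ^ (N:ℝ) :=
    (Real.one_lt_rpow_iff_of_pos (by linarith)).2 (Or.inl ⟨by linarith, hN0⟩)
  have hp1' : (0:ℝ) < (1+ε₂) ^ (N:ℝ) := by linarith
  have hp2 : (1-ε₂) ^ (N:ℝ) < 1 := Real.rpow_lt_one (by linarith) (by linarith) hN0
  have hp2' : (0:ℝ) < (1-ε₂) ^ (N:ℝ) := Real.rpow_pos_of_pos (by linarith) _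
  have hlo1 : ((1+ε₂) ^ (N:ℝ))⁻¹ < 1 := by
    rw [inv_lt_one_iff₀]; right; exact hp1
  have hhi1 : 1 < ((1-ε₂) ^ (N:ℝ))⁻¹ := by
    rw [lt_inv_comm₀ one_pos hp2']; simpa using hp2
  set Lip := Real.cosh L with hLipdef
  have hLip0 : 0 < Lip := Real.cosh_pos L
  set g₁ : ℝ → ℝ := fun x => ((1 - Lip/m*x) ^ (N-1) / Real.cosh x) ^ (N-1) *
    (1 - x * (x * Real.cosh 1) ^ (N-1) / kmin) with hg₁def
  set g₂ : ℝ → ℝ := fun x => ((1 + Lip/m*x) ^ (N-1) / (1 - x^2/4)) ^ (N-1) +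
    (x * (1 + Lip/m*x) ^ (N-1)) ^ (N:ℝ) / kmin with hg₂def
  have hg₁c : ContinuousAt g₁ 0 := by
    rw [hg₁def]
    apply ContinuousAt.mul
    · apply ContinuousAt.rpow_const _ (Or.inr hq0')
      apply ContinuousAt.div
      · exact (ContinuousAt.rpow_const (by fun_prop) (Or.inr hq0'))
      · exact Real.continuous_cosh.continuousAt
      · simp [Real.cosh_zero]
    · apply ContinuousAt.sub continuousAt_const
      apply ContinuousAt.div_const
      exact ContinuousAt.mul continuousAt_id (ContinuousAt.rpow_const (by fun_prop) (Or.inr hq0'))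
  have hg₂c : ContinuousAt g₂ 0 := by
    rw [hg₂def]
    apply ContinuousAt.add
    · apply ContinuousAt.rpow_const _ (Or.inr hq0')
      apply ContinuousAt.div
      · exact (ContinuousAt.rpow_const (by fun_prop) (Or.inr hq0'))
      · fun_prop
      · norm_num
    · apply ContinuousAt.div_const
      apply ContinuousAt.rpow_const _ (Or.inr hN0.le)
      exact ContinuousAt.mul continuousAt_id (ContinuousAt.rpow_const (by fun_prop) (Or.inr hq0'))
  have hg₁0 : g₁ 0 = 1 := by
    simp [hg₁def, Real.cosh_zero, Real.one_rpow]
  have hg₂0 : g₂ 0 = 1 := by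
    simp [hg₂def, Real.one_rpow, Real.zero_rpow hN0.ne']
  obtain ⟨a₀, ⟨hG1, hG2, hδhalf⟩, ha₀0, ha₀r⟩ :
      ∃ x : ℝ, (((1+ε₂) ^ (N:ℝ))⁻¹ < g₁ x ∧ g₂ x < ((1-ε₂) ^ (N:ℝ))⁻¹ ∧ Lip/m*x < 1/2) ∧
        0 < x ∧ x < min 1 (l/2) := by
    have e1 : ∀ᶠ x in 𝓝 (0:ℝ), ((1+ε₂) ^ (N:ℝ))⁻¹ < g₁ x := by
      have h := hg₁c.tendsto; rw [hg₁0] at h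
      exact h.eventually (eventually_gt_nhds hlo1)
    have e2 : ∀ᶠ x in 𝓝 (0:ℝ), g₂ x < ((1-ε₂) ^ (N:ℝ))⁻¹ := by
      have h := hg₂c.tendsto; rw [hg₂0] at h
      exact h.eventually (eventually_lt_nhds hhi1)
    have e3 : ∀ᶠ x in 𝓝 (0:ℝ), Lip/m*x < 1/2 := by
      have h : ContinuousAt (fun x : ℝ => Lip/m*x) 0 := by fun_prop
      have h2 := h.tendsto
      simp only [mul_zero] at h2
      exact h2.eventually (eventually_lt_nhds (by norm_num))
    have e4 : ∀ᶠ x in 𝓝[>] (0:ℝ), 0 < x ∧ x < min 1 (l/2) := by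
      have : Ioo (0:ℝ) (min 1 (l/2)) ∈ 𝓝[>] (0:ℝ) :=
        Ioo_mem_nhdsGT_of_mem ⟨le_refl _, lt_min one_pos (by linarith)⟩
      exact eventually_mem_set.2 this
    exact ((((e1.and (e2.and e3)).filter_mono nhdsWithin_le_nhds)).and e4).exists
  have ha₀1 : a₀ < 1 := lt_of_lt_of_le ha₀r (min_le_left _ _)
  have ha₀l : a₀ < l/2 := lt_of_lt_of_le ha₀r (min_le_right _ _)
  have ha₀L : a₀ ≤ L := by linarith
  obtain ⟨m₂, hm₂0, hm₂⟩ : ∃ m₂, 0 < m₂ ∧ ∀ t ∈ Icc a₀ L, m₂ ≤ sK κ t := by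
    obtain ⟨t0, ht0, hmin⟩ := (isCompact_Icc (a := a₀) (b := L)).exists_isMinOn
      (nonempty_Icc.2 ha₀L) hcont.continuousOn
    exact ⟨sK κ t0, hspos t0 (lt_of_lt_of_le ha₀0 ht0.1) ht0.2,
      fun t ht => isMinOn_iff.1 hmin t ht⟩
  set Alo := a₀ * (m / Cm) ^ (N-1) with hAlodef
  have hAlo0 : 0 < Alo := mul_pos ha₀0 (Real.rpow_pos_of_pos (div_pos hm0 hCm0) _)
  set Bhi := kmax / m₂ ^ (N-1) with hBhidef
  have hBhi0 : 0 < Bhi := div_pos hkmax0 (Real.rpow_pos_of_pos hm₂0 _)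
  refine ⟨Alo / (Alo + Bhi), div_pos hAlo0 (by linarith only [hAlo0, hBhi0]), ?_⟩
  intro D hD a ha hv
  obtain ⟨ha0, haD⟩ := ha
  have hDl : l ≤ D := hD.1
  have hDL : D ≤ L := hD.2
  have hD0 : 0 < D := lt_of_lt_of_le hl0 hDl
  have haL : a < L := lt_of_lt_of_le haD hDL
  have hsa : 0 < sK κ a := hspos a ha0 haL.le
  have hsDa : 0 < sK κ (D-a) := hspos _ (by linarith only [haD]) (by linarith only [hDL, ha0])
  have hcA : Continuous (fun y => (sK κ (D - y) / sK κ (D - a)) ^ (N-1)) :=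
    (crpow_const hq0').comp ((hcont.comp (continuous_const.sub continuous_id)).div_const _)
  have hcB : Continuous (fun y => (sK κ y / sK κ a) ^ (N-1)) :=
    (crpow_const hq0').comp (hcont.div_const _)
  have hiA : ∀ u v : ℝ, IntervalIntegrable
      (fun y => (sK κ (D - y) / sK κ (D - a)) ^ (N-1)) volume u v :=
    fun u v => hcA.intervalIntegrable u v
  set A := Aint κ N D a with hAdef
  set B := Bint κ N D a with hBdef
  have hratnn : ∀ y ∈ Icc (0:ℝ) a, 0 ≤ sK κ (D - y) / sK κ (D - a) := fun y hy =>
    div_nonneg (hsnn _ (by linarith only [hy.2, haD]) (by linarith only [hy.1, hDL])) hsDa.le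
  have hA0 : 0 < A := by
    rw [hAdef, Aint]
    exact intervalIntegral.intervalIntegral_pos_of_pos_on (hiA 0 a)
      (fun y hy => Real.rpow_pos_of_pos
        (div_pos (hspos _ (by linarith only [hy.2, haD]) (by linarith only [hy.1, hDL])) hsDa) _) ha0
  set E := ∫ t in (0:ℝ)..a, sK κ t ^ (N-1) with hEdef
  set Ia := ∫ t in a..D, sK κ t ^ (N-1) with hIadef
  have hE0 : 0 ≤ E := intervalIntegral.integral_nonneg ha0.le
    (fun u hu => Real.rpow_nonneg (hsnn u hu.1 (by linarith only [hu.2, haL])) _)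
  have hIa0 : 0 ≤ Ia := intervalIntegral.integral_nonneg haD.le
    (fun u hu => Real.rpow_nonneg (hsnn u (by linarith only [hu.1, ha0]) (by linarith only [hu.2, hDL])) _)
  have hsplitk : E + Ia = kD κ N D := by
    rw [hEdef, hIadef, kD]
    exact intervalIntegral.integral_add_adjacent_intervals (hii 0 a) (hii a D)
  have hBval : B = Ia / sK κ a ^ (N-1) := by
    rw [hBdef, Bint, hIadef, ← intervalIntegral.integral_div]
    apply intervalIntegral.integral_congr
    intro y hy
    rw [uIcc_of_le haD.le] at hy
    exact Real.div_rpow (hsnn y (by linarith only [hy.1, ha0]) (by linarith only [hy.2, hDL])) hsa.le _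
  have hB0 : 0 ≤ B := by
    rw [hBval]
    exact div_nonneg hIa0 (Real.rpow_nonneg hsa.le _)
  have hABpos : 0 < A + B := by linarith only [hA0, hB0]
  have hfval : fKND κ N D a = (A + B)⁻¹ := fKND_eq κ N D a
  have hvval : vKND κ N D a = (A+B)⁻¹ * A := by
    rw [vKND_eq κ N D a ha0.le, hfval, hAdef]
  have hkD0 : 0 < kD κ N D := lt_of_lt_of_le hkmin0 (hkDlo D hD)
  have hIakD : Ia ≤ kD κ N D := by linarith only [hsplitk, hE0]
  rcases le_or_gt a a₀ with hcase | hcase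
  · -- small a
    have hg1a : g₁ a₀ = ((1 - Lip/m*a₀) ^ (N-1) / Real.cosh a₀) ^ (N-1) *
        (1 - a₀ * (a₀ * Real.cosh 1) ^ (N-1) / kmin) := by rw [hg₁def]
    have hg2a : g₂ a₀ = ((1 + Lip/m*a₀) ^ (N-1) / (1 - a₀^2/4)) ^ (N-1) +
        (a₀ * (1 + Lip/m*a₀) ^ (N-1)) ^ (N:ℝ) / kmin := by rw [hg₂def]
    set δ := Lip/m*a₀ with hδdef
    have hδ0 : 0 < δ := mul_pos (div_pos hLip0 hm0) ha₀0
    have h1δ : 0 < 1 - δ := by linarith only [hδhalf]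
    have hrat : ∀ y ∈ Icc (0:ℝ) a, 1 - δ ≤ sK κ (D-y)/sK κ (D-a) ∧
        sK κ (D-y)/sK κ (D-a) ≤ 1 + δ := by
      intro y hy
      obtain ⟨hy1, hy2⟩ := hy
      have hDyl : l/2 ≤ D - y := by linarith only [hDl, hy2, hcase, ha₀l]
      have hDal : l/2 ≤ D - a := by linarith only [hDl, hcase, ha₀l]
      have habs := sK_lip hκ (x := D - y) (y := D - a) (M := L) (by linarith only [hy2, haD])
        (by linarith only [haD]) (by linarith only [hy1, hDL]) (by linarith only [ha0, hDL])
      have habs2 : |sK κ (D-y) - sK κ (D-a)| ≤ δ * sK κ (D-a) := by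
        have e1 : |(D-y) - (D-a)| = a - y := by
          rw [show (D-y)-(D-a) = a - y by ring, abs_of_nonneg (by linarith only [hy2])]
        have e2 : Lip * |(D-y) - (D-a)| ≤ Lip * a₀ := by
          rw [e1]; exact mul_le_mul_of_nonneg_left (by linarith only [hy1, hcase]) hLip0.le
        have e3 : m ≤ sK κ (D-a) := hm _ ⟨hDal, by linarith only [ha0, hDL]⟩
        have e4 : δ * m ≤ δ * sK κ (D-a) := mul_le_mul_of_nonneg_left e3 hδ0.le
        have e5 : δ * m = Lip * a₀ := by rw [hδdef]; field_simp
        linarith only [habs, e2, e4, e5]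
      obtain ⟨hb1, hb2⟩ := abs_le.1 habs2
      constructor
      · rw [le_div_iff₀ hsDa]
        have e6 : (1-δ) * sK κ (D-a) = sK κ (D-a) - δ * sK κ (D-a) := by ring
        linarith only [hb1, e6]
      · rw [div_le_iff₀ hsDa]
        have e6 : (1+δ) * sK κ (D-a) = sK κ (D-a) + δ * sK κ (D-a) := by ring
        linarith only [hb2, e6]
    have hAup : A ≤ a * ((1+δ) ^ (N-1)) := by
      rw [hAdef, Aint]
      apply integral_le_const ha0.le hcA.continuousOn
      intro y hy
      exact Real.rpow_le_rpow (hratnn y hy) (hrat y hy).2 hq0'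
    have hAlow : a * ((1-δ) ^ (N-1)) ≤ A := by
      rw [hAdef, Aint]
      apply const_le_integral ha0.le hcA.continuousOn
      intro y hy
      exact Real.rpow_le_rpow h1δ.le (hrat y hy).1 hq0'
    have hsaup : sK κ a ≤ a * Real.cosh a₀ := sK_le_mul_cosh hκ ha0.le hcase
    have hsalo : a * (1 - a₀^2/4) ≤ sK κ a := sK_ge hκ ha0.le hcase ha₀1.le
    have ha₀sq : 0 < 1 - a₀^2/4 := by nlinarith only [ha₀0, ha₀1]
    have hEup : E ≤ a₀ * (a₀ * Real.cosh 1) ^ (N-1) := by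
      have step : E ≤ a * (a₀ * Real.cosh 1) ^ (N-1) := by
        rw [hEdef]
        apply integral_le_const ha0.le hcontq.continuousOn
        intro t ht
        have e1 : sK κ t ≤ a₀ * Real.cosh 1 := by
          have e0 := sK_le_mul_cosh hκ ht.1 (le_trans ht.2 hcase)
          have e2 : Real.cosh a₀ ≤ Real.cosh 1 := by
            rw [Real.cosh_le_cosh, abs_of_nonneg ha₀0.le, abs_one]; exact ha₀1.le
          have e4 : t * Real.cosh a₀ ≤ a₀ * Real.cosh a₀ :=
            mul_le_mul_of_nonneg_right (le_trans ht.2 hcase) (Real.cosh_pos a₀).le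
          have e5 : a₀ * Real.cosh a₀ ≤ a₀ * Real.cosh 1 :=
            mul_le_mul_of_nonneg_left e2 ha₀0.le
          linarith only [e0, e4, e5]
        exact Real.rpow_le_rpow (hsnn t ht.1 (by linarith only [ht.2, hcase, ha₀L])) e1 hq0'
      have e3 : a * (a₀ * Real.cosh 1) ^ (N-1) ≤ a₀ * (a₀ * Real.cosh 1) ^ (N-1) :=
        mul_le_mul_of_nonneg_right hcase (Real.rpow_nonneg (by positivity) _)
      linarith only [step, e3]
    set S := A ^ (N-1) * (A+B) with hSdef
    have hpowA : A ^ (N-1) * A = A ^ N := by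
      rw [← Real.rpow_add_one hA0.ne' (N-1)]
      norm_num
    have hSA : S = A ^ N + (A / sK κ a) ^ (N-1) * Ia := by
      rw [hSdef, hBval, Real.div_rpow hA0.le hsa.le, mul_add, hpowA]
      ring
    have hAdivnn : 0 ≤ A / sK κ a := div_nonneg hA0.le hsa.le
    have hAdiv_lo : (1-δ) ^ (N-1) / Real.cosh a₀ ≤ A / sK κ a := by
      have e1 : (1-δ) ^ (N-1) / Real.cosh a₀ = (a * ((1-δ) ^ (N-1))) / (a * Real.cosh a₀) := by
        rw [mul_div_mul_left _ _ ha0.ne']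
      rw [e1]
      exact div_le_div₀ hA0.le hAlow hsa hsaup
    have hAdiv_hi : A / sK κ a ≤ (1+δ) ^ (N-1) / (1 - a₀^2/4) := by
      have e1 : (1+δ) ^ (N-1) / (1 - a₀^2/4) = (a * ((1+δ) ^ (N-1))) / (a * (1 - a₀^2/4)) := by
        rw [mul_div_mul_left _ _ ha0.ne']
      rw [e1]
      exact div_le_div₀ (mul_nonneg ha0.le (Real.rpow_nonneg (by linarith only [hδ0]) _)) hAup
        (mul_pos ha0 ha₀sq) hsalo
    have hANle : A ^ N ≤ (a₀ * (1+δ) ^ (N-1)) ^ (N:ℝ) := by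
      apply Real.rpow_le_rpow hA0.le _ hN0.le
      calc A ≤ a * ((1+δ) ^ (N-1)) := hAup
      _ ≤ a₀ * (1+δ)^(N-1) := mul_le_mul_of_nonneg_right hcase (Real.rpow_nonneg (by linarith only [hδ0]) _)
    have hterm2 : (A / sK κ a) ^ (N-1) * Ia ≤
        ((1+δ) ^ (N-1) / (1 - a₀^2/4)) ^ (N-1) * kD κ N D := by
      apply mul_le_mul (Real.rpow_le_rpow hAdivnn hAdiv_hi hq0') hIakD hIa0
      exact Real.rpow_nonneg (div_nonneg (Real.rpow_nonneg (by linarith only [hδ0]) _) ha₀sq.le) _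
    have hterm1 : (a₀ * (1+δ) ^ (N-1)) ^ (N:ℝ) ≤
        (a₀ * (1+δ) ^ (N-1)) ^ (N:ℝ) / kmin * kD κ N D := by
      have hX0 : 0 ≤ (a₀ * (1+δ) ^ (N-1)) ^ (N:ℝ) :=
        Real.rpow_nonneg (mul_nonneg ha₀0.le (Real.rpow_nonneg (by linarith only [hδ0]) _)) _
      have h10 := mul_le_mul_of_nonneg_left (hkDlo D hD) (div_nonneg hX0 hkmin0.le)
      rwa [div_mul_cancel₀ _ hkmin0.ne'] at h10
    have hS_hi : S ≤ g₂ a₀ * kD κ N D := by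
      rw [hSA, hg2a, add_mul, div_mul_eq_mul_div, ← div_mul_eq_mul_div]
      linarith only [hANle, hterm1, hterm2]
    have hS_lo : g₁ a₀ * kD κ N D ≤ S := by
      rw [hSA, hg1a]
      set F := ((1 - δ) ^ (N-1) / Real.cosh a₀) ^ (N-1) with hFdef
      set e := a₀ * (a₀ * Real.cosh 1) ^ (N-1) with hedef
      have hF0 : 0 ≤ F :=
        Real.rpow_nonneg (div_nonneg (Real.rpow_nonneg h1δ.le _) (Real.cosh_pos a₀).le) _
      have he0 : 0 ≤ e := mul_nonneg ha₀0.le (Real.rpow_nonneg (by positivity) _)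
      have h1 : (1 - e/kmin) * kD κ N D ≤ Ia := by
        have h2 : e * kmin ≤ e * kD κ N D := mul_le_mul_of_nonneg_left (hkDlo D hD) he0
        have h3 : (1 - e/kmin) * kD κ N D = kD κ N D - e * kD κ N D/kmin := by ring
        have h4 : e ≤ e * kD κ N D / kmin := by rw [le_div_iff₀ hkmin0]; linarith only [h2]
        linarith only [h3, h4, hEup, hsplitk]
      have h6 : F ≤ (A / sK κ a) ^ (N-1) :=
        Real.rpow_le_rpow (div_nonneg (Real.rpow_nonneg h1δ.le _) (Real.cosh_pos a₀).le)
          hAdiv_lo hq0'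
      have h7 : F * Ia ≤ (A / sK κ a) ^ (N-1) * Ia := mul_le_mul_of_nonneg_right h6 hIa0
      have hAN0 : 0 ≤ A ^ N := Real.rpow_nonneg hA0.le _
      calc F * (1 - e/kmin) * kD κ N D = F * ((1 - e/kmin) * kD κ N D) := by ring
      _ ≤ F * Ia := mul_le_mul_of_nonneg_left h1 hF0
      _ ≤ (A / sK κ a) ^ (N-1) * Ia := h7
      _ ≤ A ^ N + (A / sK κ a) ^ (N-1) * Ia := by linarith only [hAN0]
    have hS0 : 0 < S := by
      rw [hSdef]; exact mul_pos (Real.rpow_pos_of_pos hA0 _) hABpos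
    have hq1 : (1-ε₂) ^ (N:ℝ) ≤ kD κ N D / S := by
      rw [le_div_iff₀ hS0]
      have h8 : S ≤ ((1-ε₂) ^ (N:ℝ))⁻¹ * kD κ N D :=
        le_trans hS_hi (mul_le_mul_of_nonneg_right hG2.le hkD0.le)
      calc (1-ε₂)^(N:ℝ) * S ≤ (1-ε₂)^(N:ℝ) * (((1-ε₂)^(N:ℝ))⁻¹ * kD κ N D) :=
        mul_le_mul_of_nonneg_left h8 hp2'.le
      _ = kD κ N D := by rw [← mul_assoc, mul_inv_cancel₀ hp2'.ne', one_mul]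
    have hq2 : kD κ N D / S ≤ (1+ε₂) ^ (N:ℝ) := by
      rw [div_le_iff₀ hS0]
      have h8 : ((1+ε₂) ^ (N:ℝ))⁻¹ * kD κ N D ≤ S :=
        le_trans (mul_le_mul_of_nonneg_right hG1.le hkD0.le) hS_lo
      calc kD κ N D = (1+ε₂)^(N:ℝ) * (((1+ε₂)^(N:ℝ))⁻¹ * kD κ N D) := by
            rw [← mul_assoc, mul_inv_cancel₀ hp1'.ne', one_mul]
      _ ≤ (1+ε₂)^(N:ℝ) * S := mul_le_mul_of_nonneg_left h8 hp1'.le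
    have hkey : fKND κ N D a * kD κ N D ^ (1/N) / vKND κ N D a ^ ((N-1)/N) =
        (kD κ N D / S) ^ (1/N) := by
      have hu1 : (0:ℝ) < (A+B) ^ ((1:ℝ)/N) := Real.rpow_pos_of_pos hABpos _
      have hu2 : (0:ℝ) < (A+B) ^ ((N-1)/N) := Real.rpow_pos_of_pos hABpos _
      have hA1 : (0:ℝ) < A ^ ((N-1)/N) := Real.rpow_pos_of_pos hA0 _
      have key2 : (A ^ (N-1) * (A+B)) ^ ((1:ℝ)/N) = A ^ ((N-1)/N) * (A+B) ^ ((1:ℝ)/N) := by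
        rw [Real.mul_rpow (Real.rpow_nonneg hA0.le _) hABpos.le, ← Real.rpow_mul hA0.le,
          mul_one_div]
      have h5 : (A+B)⁻¹ * (A+B) ^ ((1:ℝ)/N) = ((A+B) ^ ((N-1)/N))⁻¹ := by
        rw [← Real.rpow_neg_one (A+B), ← Real.rpow_add hABpos, ← Real.rpow_neg hABpos.le]
        congr 1
        field_simp
        ring
      rw [hfval, hvval, hSdef]
      rw [Real.div_rpow hkD0.le (mul_nonneg (Real.rpow_nonneg hA0.le _) hABpos.le)]
      rw [key2]
      rw [Real.mul_rpow (inv_nonneg.2 hABpos.le) hA0.le, Real.inv_rpow hABpos.le]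
      rw [div_eq_div_iff (by positivity) (by positivity)]
      rw [← h5]
      ring
    rw [hkey]
    have hNN : N * (1/N) = 1 := by field_simp
    have hlow : 1 - ε₂ ≤ (kD κ N D / S) ^ (1/N) := by
      have h9 := Real.rpow_le_rpow hp2'.le hq1 (by positivity : (0:ℝ) ≤ 1/N)
      rwa [← Real.rpow_mul (by linarith only [hε₂h] : (0:ℝ) ≤ 1-ε₂), hNN, Real.rpow_one] at h9
    have hup : (kD κ N D / S) ^ (1/N) ≤ 1 + ε₂ := by
      have h9 := Real.rpow_le_rpow (div_nonneg hkD0.le hS0.le) hq2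
        (by positivity : (0:ℝ) ≤ 1/N)
      rwa [← Real.rpow_mul (by linarith only [hε₂0] : (0:ℝ) ≤ 1+ε₂), hNN, Real.rpow_one] at h9
    rw [abs_le]
    constructor <;> linarith only [hlow, hup, hε₂ε, hε₂0]

  · -- large a: contradiction with hv
    exfalso
    have hAsplit : (∫ y in (0:ℝ)..a₀, (sK κ (D - y) / sK κ (D - a)) ^ (N-1)) +
        (∫ y in a₀..a, (sK κ (D - y) / sK κ (D - a)) ^ (N-1)) = A := by
      rw [hAdef, Aint]
      exact intervalIntegral.integral_add_adjacent_intervals (hiA 0 a₀) (hiA a₀ a)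
    have h1 : a₀ * (m/Cm) ^ (N-1) ≤ ∫ y in (0:ℝ)..a₀, (sK κ (D - y) / sK κ (D - a)) ^ (N-1) := by
      apply const_le_integral ha₀0.le hcA.continuousOn
      intro y hy
      have hDy1 : l/2 ≤ D - y := by linarith [hy.2]
      have hDy2 : D - y ≤ L := by linarith [hy.1]
      have hr : m/Cm ≤ sK κ (D - y) / sK κ (D - a) := by
        apply div_le_div₀ (hsnn _ (by linarith) hDy2) (hm _ ⟨hDy1, hDy2⟩) hsDa
        exact hCm _ ⟨by linarith, by linarith⟩
      exact Real.rpow_le_rpow (div_nonneg hm0.le hCm0.le) hr hq0'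
    have h2 : 0 ≤ ∫ y in a₀..a, (sK κ (D - y) / sK κ (D - a)) ^ (N-1) := by
      apply intervalIntegral.integral_nonneg hcase.le
      intro u hu
      exact Real.rpow_nonneg (hratnn u ⟨by linarith [hu.1], hu.2⟩) _
    have hAgeAlo : Alo ≤ A := by rw [hAlodef]; linarith only [h1, h2, hAsplit]
    have hsaq : m₂ ^ (N-1) ≤ sK κ a ^ (N-1) :=
      Real.rpow_le_rpow hm₂0.le (hm₂ a ⟨hcase.le, haL.le⟩) hq0'
    have hBle : B ≤ Bhi := by
      rw [hBval, hBhidef]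
      exact div_le_div₀ hkmax0.le (by linarith only [hIakD, hkDhi D hD]) (Real.rpow_pos_of_pos hm₂0 _) hsaq
    have hcross : Alo * (A + B) ≤ A * (Alo + Bhi) := by
      have h3 : Alo * B ≤ A * Bhi := mul_le_mul hAgeAlo hBle hB0 hA0.le
      ring_nf
      ring_nf at h3
      linarith only [h3]
    have hvlow : Alo / (Alo + Bhi) ≤ (A+B)⁻¹ * A := by
      rw [inv_mul_eq_div, div_le_div_iff₀ (by linarith only [hAlo0, hBhi0]) hABpos]
      linarith only [hcross]
    rw [hvval] at hv
    linarith only [hv, hvlow]
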